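/- Let k ≥ 2 and t ∈ Z_{2^k}. If t = 0 then N_2(t, 2^k) = 2^k. If t ≠ 0, write t = 2^α β with β odd and 0 ≤ α < k. Then N_2(t, 2^k) = 2^{k+1} if 0 ≤ α < k−1 and β ≡ 1 (mod 4); N_2(t, 2^k) = 0 if 0 ≤ α < k−1 and β ≡ 3 (mod 4); and N_2(t, 2^k) = 2^k if α = k−1. -/

import Mathlib

/-- `sumSqCount m n t` is the number of `m`-tuples of elements of `ZMod n` whose
squares sum to `t`. -/
noncomputable def sumSqCount (m n : ℕ) (t : ZMod n) : ℕ :=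
  Nat.card {x : Fin m → ZMod n // ∑ i, (x i) ^ 2 = t}

instance (k : ℕ) : NeZero ((2:ℕ)^k) := ⟨pow_ne_zero k two_ne_zero⟩
abbrev Sol (k : ℕ) (t : ZMod (2^k)) : Type :=
  {p : ZMod (2^k) × ZMod (2^k) // p.1^2 + p.2^2 = t}
noncomputable def cnt (k : ℕ) (t : ZMod (2^k)) : ℕ := Nat.card (Sol k t)

lemma two_pow_zmod (n : ℕ) : ((2:ZMod (2^n)))^n = 0 := by
  have : ((2^n : ℕ) : ZMod (2^n)) = 0 := ZMod.natCast_self _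
  push_cast at this; exact this

lemma sq_lift (k : ℕ) (A e : ℕ) :
    (((2*A + 2^(k+1)*e : ℕ) : ZMod (2^(k+2))))^2 = ((4 * A^2 : ℕ) : ZMod (2^(k+2))) := by
  have h0 := two_pow_zmod (k+2)
  push_cast
  linear_combination ((2:ZMod (2^(k+2)))*A*e + 2^k*(e:ZMod (2^(k+2)))^2) * h0

lemma natCast_val_self (n : ℕ) [NeZero n] (a : ZMod n) : ((a.val : ℕ) : ZMod n) = a :=
  ZMod.natCast_rightInverse a

lemma mod4_decide : ∀ u v : ZMod 4, u^2 + v^2 = 0 → u.val % 2 = 0 ∧ v.val % 2 = 0 := by decide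

lemma even_of_sol (k : ℕ) (x y : ZMod (2^(k+2))) (c : ℕ)
    (h : x^2 + y^2 = ((4*c : ℕ) : ZMod (2^(k+2)))) : x.val % 2 = 0 ∧ y.val % 2 = 0 := by
  have hdvd : (4:ℕ) ∣ 2^(k+2) := ⟨2^k, by ring⟩
  have h2 := congrArg (ZMod.castHom hdvd (ZMod 4)) h
  simp only [map_add, map_pow, map_natCast] at h2
  have h4 : ((4*c : ℕ) : ZMod 4) = 0 := by
    push_cast
    have : ((4:ℕ) : ZMod 4) = 0 := by decide
    push_cast at this
    rw [this]; ring
  rw [h4] at h2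
  rw [show (ZMod.castHom hdvd (ZMod 4)) x = ((x.val : ℕ) : ZMod 4) from by
        rw [ZMod.castHom_apply, ZMod.natCast_val],
      show (ZMod.castHom hdvd (ZMod 4)) y = ((y.val : ℕ) : ZMod 4) from by
        rw [ZMod.castHom_apply, ZMod.natCast_val]] at h2
  have := mod4_decide _ _ h2
  rw [ZMod.val_natCast, ZMod.val_natCast] at this
  omega

section Quarter
variable (k : ℕ) (s : ZMod (2^k))

def qMap (p : (Fin 2 × Fin 2) × Sol k s) : Sol (k+2) ((4*s.val : ℕ) : ZMod (2^(k+2))) :=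
  ⟨(((2*p.2.1.1.val + 2^(k+1)*p.1.1.val : ℕ) : ZMod (2^(k+2))),
    ((2*p.2.1.2.val + 2^(k+1)*p.1.2.val : ℕ) : ZMod (2^(k+2)))), by
    rw [sq_lift, sq_lift, ← Nat.cast_add]
    rw [ZMod.natCast_eq_natCast_iff]
    have hab := p.2.2
    have hv : ((p.2.1.1.val^2 + p.2.1.2.val^2 : ℕ) : ZMod (2^k))
        = ((s.val : ℕ) : ZMod (2^k)) := by
      push_cast
      rw [natCast_val_self, natCast_val_self, natCast_val_self]
      exact hab
    have hm := (ZMod.natCast_eq_natCast_iff _ _ _).mp hv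
    have hm4 := hm.mul_left' (c := 4)
    rw [show 4*2^k = 2^(k+2) from by ring] at hm4
    calc 4*p.2.1.1.val^2 + 4*p.2.1.2.val^2
        = 4*(p.2.1.1.val^2 + p.2.1.2.val^2) := by ring
      _ ≡ 4*s.val [MOD 2^(k+2)] := hm4⟩

def qInv (q : Sol (k+2) ((4*s.val : ℕ) : ZMod (2^(k+2)))) : (Fin 2 × Fin 2) × Sol k s :=
  ⟨(⟨q.1.1.val / 2^(k+1), by
      have h1 : q.1.1.val < 2^(k+2) := ZMod.val_lt _
      rw [Nat.div_lt_iff_lt_mul (by positivity)]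
      calc q.1.1.val < 2^(k+2) := h1
        _ = 2*2^(k+1) := by ring⟩,
    ⟨q.1.2.val / 2^(k+1), by
      have h1 : q.1.2.val < 2^(k+2) := ZMod.val_lt _
      rw [Nat.div_lt_iff_lt_mul (by positivity)]
      calc q.1.2.val < 2^(k+2) := h1
        _ = 2*2^(k+1) := by ring⟩),
   ⟨(((q.1.1.val/2 : ℕ) : ZMod (2^k)), ((q.1.2.val/2 : ℕ) : ZMod (2^k))), by
      obtain ⟨hx, hy⟩ := even_of_sol k q.1.1 q.1.2 s.val q.2
      have h' : ((q.1.1.val^2 + q.1.2.val^2 : ℕ) : ZMod (2^(k+2))) = ((4*s.val : ℕ)) := by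
        push_cast
        rw [natCast_val_self, natCast_val_self]
        have hq := q.2
        push_cast at hq
        exact hq
      have hmm := (ZMod.natCast_eq_natCast_iff _ _ _).mp h'
      set A := q.1.1.val/2 with hAdef
      set B := q.1.2.val/2 with hBdef
      have hA : q.1.1.val = 2*A := by omega
      have hB : q.1.2.val = 2*B := by omega
      rw [hA, hB, show (2*A)^2 + (2*B)^2 = 4*(A^2+B^2) from by ring] at hmm
      have hk' : A^2+B^2 ≡ s.val [MOD 2^k] := by
        rw [Nat.modEq_iff_dvd] at hmm ⊢
        push_cast at hmm ⊢
        have h9 : (4:ℤ)*2^k ∣ 4*((s.val:ℤ) - (A^2+B^2)) := by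
          rw [show ((4:ℤ)*2^k) = 2^(k+2) from by ring]
          convert hmm using 1
          ring
        exact (mul_dvd_mul_iff_left (by norm_num : (4:ℤ) ≠ 0)).mp h9
      have := (ZMod.natCast_eq_natCast_iff _ _ _).mpr hk'
      push_cast at this
      rw [natCast_val_self] at this
      exact this⟩⟩
end Quarter

lemma lift_val (k A e : ℕ) (hA : A < 2^k) (he : e < 2) :
    (((2*A + 2^(k+1)*e : ℕ) : ZMod (2^(k+2)))).val = 2*A + 2^(k+1)*e := by
  apply ZMod.val_cast_of_lt
  have h1 : (2:ℕ)^(k+1) = 2*2^k := by ring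
  have h2 : (2:ℕ)^(k+2) = 4*2^k := by ring
  interval_cases e <;> omega

lemma lift_div1 (k A e : ℕ) (hA : A < 2^k) : (2*A + 2^(k+1)*e) / 2^(k+1) = e := by
  rw [Nat.add_mul_div_left _ _ (by positivity)]
  rw [Nat.div_eq_of_lt (by rw [show (2:ℕ)^(k+1) = 2*2^k from by ring]; omega)]
  omega

lemma lift_div2 (k A e : ℕ) : (2*A + 2^(k+1)*e) / 2 = A + 2^k*e := by
  rw [show 2*A + 2^(k+1)*e = 2*(A + 2^k*e) from by ring, Nat.mul_div_cancel_left _ (by norm_num)]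

lemma recomp (k v : ℕ) (hv : v < 2^(k+2)) (he : v % 2 = 0) :
    2*((v/2) % 2^k) + 2^(k+1)*(v/2^(k+1)) = v := by
  have e2 : (v/2)/2^k = v/2^(k+1) := by
    rw [Nat.div_div_eq_div_mul]; congr 1; ring
  have e1 : (v/2) % 2^k + 2^k * ((v/2)/2^k) = v/2 := Nat.mod_add_div _ _
  rw [e2] at e1
  have e3 : (2:ℕ)^(k+1)*(v/2^(k+1)) = 2*(2^k*(v/2^(k+1))) := by ring
  set M := (v/2) % 2^k
  set X := 2^k*(v/2^(k+1))
  omega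

noncomputable def qEquiv (k : ℕ) (s : ZMod (2^k)) :
    ((Fin 2 × Fin 2) × Sol k s) ≃ Sol (k+2) ((4*s.val : ℕ) : ZMod (2^(k+2))) where
  toFun := qMap k s
  invFun := qInv k s
  left_inv := by
    rintro ⟨⟨ε, δ⟩, ⟨⟨a,b⟩, hab⟩⟩
    have hA : a.val < 2^k := ZMod.val_lt a
    have hB : b.val < 2^k := ZMod.val_lt b
    simp only [qMap, qInv]
    refine Prod.ext (Prod.ext (Fin.ext ?_) (Fin.ext ?_)) (Subtype.ext (Prod.ext ?_ ?_)) <;>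
      simp only
    · rw [lift_val k _ _ hA ε.isLt, lift_div1 k _ _ hA]
    · rw [lift_val k _ _ hB δ.isLt, lift_div1 k _ _ hB]
    · rw [lift_val k _ _ hA ε.isLt, lift_div2]
      push_cast
      rw [two_pow_zmod]
      simp [natCast_val_self]
    · rw [lift_val k _ _ hB δ.isLt, lift_div2]
      push_cast
      rw [two_pow_zmod]
      simp [natCast_val_self]
  right_inv := by
    rintro ⟨⟨x,y⟩, h⟩
    obtain ⟨hx, hy⟩ := even_of_sol k x y s.val h
    have hxl : x.val < 2^(k+2) := ZMod.val_lt x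
    have hyl : y.val < 2^(k+2) := ZMod.val_lt y
    simp only [qMap, qInv]
    refine Subtype.ext (Prod.ext ?_ ?_) <;> simp only
    · rw [ZMod.val_natCast, recomp k x.val hxl hx]
      exact natCast_val_self _ x
    · rw [ZMod.val_natCast, recomp k y.val hyl hy]
      exact natCast_val_self _ y

lemma quarter (k : ℕ) (s : ZMod (2^k)) : cnt (k+2) ((4*s.val : ℕ) : ZMod (2^(k+2))) = 4 * cnt k s := by
  rw [cnt, cnt, ← Nat.card_congr (qEquiv k s), Nat.card_prod, Nat.card_prod]
  simp [Nat.card_eq_fintype_card]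


lemma cnt_eq_card (k : ℕ) (t : ZMod (2^k)) :
    cnt k t = (Finset.univ.filter
      (fun p : ZMod (2^k) × ZMod (2^k) => p.1^2 + p.2^2 = t)).card := by
  rw [cnt, Nat.card_eq_fintype_card, Fintype.card_subtype]

lemma sumSqCount_eq (k : ℕ) (t : ZMod (2^k)) : sumSqCount 2 (2^k) t = cnt k t := by
  refine Nat.card_congr (Equiv.subtypeEquiv (finTwoArrowEquiv (ZMod (2^k))) ?_)
  intro x
  simp [Fin.sum_univ_two, finTwoArrowEquiv]

/-- the square of (a : ZMod 2^(m+3)) seen one level up -/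
def sq2 (m : ℕ) (a : ZMod (2^(m+3))) : ZMod (2^(m+4)) := ((a.val^2 : ℕ) : ZMod (2^(m+4)))

abbrev Mset (m : ℕ) (t : ZMod (2^(m+4))) : Type :=
  {p : ZMod (2^(m+3)) × ZMod (2^(m+3)) // sq2 m p.1 + sq2 m p.2 = t}

lemma sq_lift2 (m A e : ℕ) :
    (((A + 2^(m+3)*e : ℕ) : ZMod (2^(m+4))))^2 = ((A^2 : ℕ) : ZMod (2^(m+4))) := by
  have h0 := two_pow_zmod (m+4)
  push_cast
  linear_combination ((A:ZMod (2^(m+4)))*e + 2^(m+2)*(e:ZMod (2^(m+4)))^2) * h0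

lemma cast_mod_dvd (x N d : ℕ) [NeZero d] (h : d ∣ N) :
    ((x % N : ℕ) : ZMod d) = (x : ZMod d) :=
  (ZMod.natCast_eq_natCast_iff _ _ _).mpr ((Nat.mod_modEq x N).of_dvd h)

lemma sq2_eq (m : ℕ) (x : ZMod (2^(m+4))) :
    x^2 = sq2 m ((x.val : ℕ) : ZMod (2^(m+3))) := by
  rw [sq2, ZMod.val_natCast]
  have hAE : x.val % 2^(m+3) + 2^(m+3) * (x.val / 2^(m+3)) = x.val := Nat.mod_add_div _ _
  have hx : x = ((x.val % 2^(m+3) + 2^(m+3) * (x.val / 2^(m+3)) : ℕ) : ZMod (2^(m+4))) := by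
    rw [hAE, natCast_val_self]
  conv_lhs => rw [hx]
  exact sq_lift2 m _ _

noncomputable def liftEquiv (m : ℕ) (t : ZMod (2^(m+4))) :
    ((Fin 2 × Fin 2) × Mset m t) ≃ Sol (m+4) t where
  toFun := fun p =>
    ⟨(((p.2.1.1.val + 2^(m+3)*p.1.1.val : ℕ) : ZMod (2^(m+4))),
      ((p.2.1.2.val + 2^(m+3)*p.1.2.val : ℕ) : ZMod (2^(m+4)))), by
      rw [sq_lift2, sq_lift2]
      have h := p.2.2
      rw [sq2, sq2] at h
      exact h⟩
  invFun := fun q =>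
    ⟨(⟨q.1.1.val / 2^(m+3), by
        rw [Nat.div_lt_iff_lt_mul (by positivity)]
        calc q.1.1.val < 2^(m+4) := ZMod.val_lt _
          _ = 2*2^(m+3) := by ring⟩,
      ⟨q.1.2.val / 2^(m+3), by
        rw [Nat.div_lt_iff_lt_mul (by positivity)]
        calc q.1.2.val < 2^(m+4) := ZMod.val_lt _
          _ = 2*2^(m+3) := by ring⟩),
     ⟨(((q.1.1.val : ℕ) : ZMod (2^(m+3))), ((q.1.2.val : ℕ) : ZMod (2^(m+3)))), by
        rw [← sq2_eq, ← sq2_eq]; exact q.2⟩⟩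
  left_inv := by
    rintro ⟨⟨ε, δ⟩, ⟨⟨a,b⟩, hab⟩⟩
    have hA : a.val < 2^(m+3) := ZMod.val_lt a
    have hB : b.val < 2^(m+3) := ZMod.val_lt b
    have hv1 : ((a.val + 2^(m+3)*ε.val : ℕ) : ZMod (2^(m+4))).val
        = a.val + 2^(m+3)*ε.val := by
      apply ZMod.val_cast_of_lt
      have h2 : (2:ℕ)^(m+4) = 2*2^(m+3) := by ring
      have := ε.isLt
      interval_cases h : ε.val <;> omega
    have hv2 : ((b.val + 2^(m+3)*δ.val : ℕ) : ZMod (2^(m+4))).val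
        = b.val + 2^(m+3)*δ.val := by
      apply ZMod.val_cast_of_lt
      have h2 : (2:ℕ)^(m+4) = 2*2^(m+3) := by ring
      have := δ.isLt
      interval_cases h : δ.val <;> omega
    simp only
    refine Prod.ext (Prod.ext (Fin.ext ?_) (Fin.ext ?_)) (Subtype.ext (Prod.ext ?_ ?_)) <;>
      simp only [hv1, hv2]
    · rw [Nat.add_mul_div_left _ _ (by positivity), Nat.div_eq_of_lt hA]; omega
    · rw [Nat.add_mul_div_left _ _ (by positivity), Nat.div_eq_of_lt hB]; omega
    · push_cast
      rw [two_pow_zmod]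
      simp [natCast_val_self]
    · push_cast
      rw [two_pow_zmod]
      simp [natCast_val_self]
  right_inv := by
    rintro ⟨⟨x,y⟩, h⟩
    simp only
    refine Subtype.ext (Prod.ext ?_ ?_) <;> simp only [ZMod.val_natCast]
    · rw [Nat.mod_add_div]
      exact natCast_val_self _ x
    · rw [Nat.mod_add_div]
      exact natCast_val_self _ y

lemma val_flip (m : ℕ) (a : ZMod (2^(m+3))) :
    (a + ((2^(m+2) : ℕ) : ZMod (2^(m+3)))).val = (a.val + 2^(m+2)) % 2^(m+3) := by
  have h3 : (2:ℕ)^(m+3) = 2*2^(m+2) := by ring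
  have hp : (0:ℕ) < 2^(m+2) := by positivity
  rw [ZMod.val_add, ZMod.val_natCast,
    show (2:ℕ)^(m+2) % 2^(m+3) = 2^(m+2) from Nat.mod_eq_of_lt (by omega)]

lemma sq2_flip (m : ℕ) (a : ZMod (2^(m+3))) (ha : a.val % 2 = 1) :
    sq2 m (a + ((2^(m+2) : ℕ) : ZMod (2^(m+3))))
      = sq2 m a + ((2^(m+3) : ℕ) : ZMod (2^(m+4))) := by
  have h0 := two_pow_zmod (m+4)
  have hv := val_flip m a
  have hlt : a.val < 2^(m+3) := ZMod.val_lt a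
  have h3 : (2:ℕ)^(m+3) = 2*2^(m+2) := by ring
  rw [sq2, sq2, hv]
  rcases Nat.lt_or_ge a.val (2^(m+2)) with hc | hc
  · rw [Nat.mod_eq_of_lt (by omega)]
    obtain ⟨q, hq⟩ : ∃ q, a.val = 2*q+1 := ⟨a.val/2, by omega⟩
    rw [hq]
    push_cast
    linear_combination ((q:ZMod (2^(m+4))) + 2^m) * h0
  · have hsub : (a.val + 2^(m+2)) % 2^(m+3) = a.val - 2^(m+2) := by
      rw [Nat.mod_eq_sub_mod (by omega), show a.val + 2^(m+2) - 2^(m+3) = a.val - 2^(m+2) from by omega,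
        Nat.mod_eq_of_lt (by omega)]
    rw [hsub]
    obtain ⟨q, hq⟩ : ∃ q, a.val - 2^(m+2) = 2*q+1 ∧ a.val = 2*q+1 + 2^(m+2) := by
      have h2 : (2:ℕ)^(m+2) % 2 = 0 := by
        rw [show (2:ℕ)^(m+2) = 2^(m+1)*2 from by ring]; omega
      refine ⟨(a.val - 2^(m+2))/2, ?_, ?_⟩ <;> omega
    rw [hq.1, hq.2]
    push_cast
    linear_combination (-(q:ZMod (2^(m+4))) - 1 - 2^m) * h0

lemma flip_parity (m : ℕ) (a : ZMod (2^(m+3))) :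
    (a + ((2^(m+2) : ℕ) : ZMod (2^(m+3)))).val % 2 = a.val % 2 := by
  rw [val_flip]
  have hlt : a.val < 2^(m+3) := ZMod.val_lt a
  have h3 : (2:ℕ)^(m+3) = 2*2^(m+2) := by ring
  have h2 : (2:ℕ)^(m+2) % 2 = 0 := by
    rw [show (2:ℕ)^(m+2) = 2^(m+1)*2 from by ring]; omega
  rcases Nat.lt_or_ge (a.val + 2^(m+2)) (2^(m+3)) with hc | hc
  · rw [Nat.mod_eq_of_lt hc]; omega
  · have hsub : (a.val + 2^(m+2)) % 2^(m+3) = a.val - 2^(m+2) := by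
      rw [Nat.mod_eq_sub_mod (by omega), show a.val + 2^(m+2) - 2^(m+3) = a.val - 2^(m+2) from by omega,
        Nat.mod_eq_of_lt (by omega)]
    rw [hsub]; omega

lemma zflip_flip (m : ℕ) (a : ZMod (2^(m+3))) :
    a + ((2^(m+2) : ℕ) : ZMod (2^(m+3))) + ((2^(m+2) : ℕ) : ZMod (2^(m+3))) = a := by
  have h0 := two_pow_zmod (m+3)
  push_cast
  linear_combination h0

lemma mem_parity (m : ℕ) (t : ZMod (2^(m+4))) (h4 : t.val % 4 ≠ 0)
    (a b : ZMod (2^(m+3))) (h : sq2 m a + sq2 m b = t) (ha : a.val % 2 = 0) :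
    b.val % 2 = 1 := by
  by_contra hb
  have hb0 : b.val % 2 = 0 := by omega
  rw [sq2, sq2, ← Nat.cast_add] at h
  have hval : t.val = (a.val^2 + b.val^2) % 2^(m+4) := by rw [← h, ZMod.val_natCast]
  have hd : (a.val^2 + b.val^2) % 2^(m+4) % 4 = (a.val^2 + b.val^2) % 4 :=
    Nat.mod_mod_of_dvd _ ⟨2^(m+2), by ring⟩
  obtain ⟨u, hu⟩ : ∃ u, a.val = 2*u := ⟨a.val/2, by omega⟩
  obtain ⟨v, hv⟩ : ∃ v, b.val = 2*v := ⟨b.val/2, by omega⟩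
  have : a.val^2 + b.val^2 = 4*(u^2+v^2) := by rw [hu, hv]; ring
  omega

lemma tval4 (m : ℕ) (t : ZMod (2^(m+4))) (h4 : t.val % 4 ≠ 0) :
    (t + ((2^(m+3) : ℕ) : ZMod (2^(m+4)))).val % 4 ≠ 0 := by
  rw [ZMod.val_add, ZMod.val_natCast]
  have hlt : t.val < 2^(m+4) := ZMod.val_lt t
  have h3 : (2:ℕ)^(m+4) = 2*2^(m+3) := by ring
  have h2 : (2:ℕ)^(m+3) % 4 = 0 := by
    rw [show (2:ℕ)^(m+3) = 2^(m+1)*4 from by ring]; omega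
  have hp : (0:ℕ) < 2^(m+3) := by positivity
  rw [show (2:ℕ)^(m+3) % 2^(m+4) = 2^(m+3) from Nat.mod_eq_of_lt (by omega)]
  rcases Nat.lt_or_ge (t.val + 2^(m+3)) (2^(m+4)) with hc | hc
  · rw [Nat.mod_eq_of_lt hc]; omega
  · have hsub : (t.val + 2^(m+3)) % 2^(m+4) = t.val - 2^(m+3) := by
      rw [Nat.mod_eq_sub_mod (by omega), show t.val + 2^(m+3) - 2^(m+4) = t.val - 2^(m+3) from by omega,
        Nat.mod_eq_of_lt (by omega)]
    rw [hsub]; omega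

lemma dshift_add_dshift (m : ℕ) :
    ((2^(m+3) : ℕ) : ZMod (2^(m+4))) + ((2^(m+3) : ℕ) : ZMod (2^(m+4))) = 0 := by
  have h0 := two_pow_zmod (m+4)
  push_cast
  linear_combination h0

noncomputable def flipEquiv (m : ℕ) (t : ZMod (2^(m+4))) (h4 : t.val % 4 ≠ 0) :
    Mset m t ≃ Mset m (t + ((2^(m+3) : ℕ) : ZMod (2^(m+4)))) where
  toFun := fun p =>
    if h : p.1.1.val % 2 = 1 then
      ⟨(p.1.1 + ((2^(m+2) : ℕ) : ZMod (2^(m+3))), p.1.2), by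
        rw [sq2_flip m _ h]; linear_combination p.2⟩
    else
      ⟨(p.1.1, p.1.2 + ((2^(m+2) : ℕ) : ZMod (2^(m+3)))), by
        have hb := mem_parity m t h4 p.1.1 p.1.2 p.2 (by omega)
        rw [sq2_flip m _ hb]; linear_combination p.2⟩
  invFun := fun q =>
    if h : q.1.1.val % 2 = 1 then
      ⟨(q.1.1 + ((2^(m+2) : ℕ) : ZMod (2^(m+3))), q.1.2), by
        rw [sq2_flip m _ h]
        have h2 := dshift_add_dshift m
        linear_combination q.2 + h2⟩
    else
      ⟨(q.1.1, q.1.2 + ((2^(m+2) : ℕ) : ZMod (2^(m+3)))), by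
        have hb := mem_parity m _ (tval4 m t h4) q.1.1 q.1.2 q.2 (by omega)
        rw [sq2_flip m _ hb]
        have h2 := dshift_add_dshift m
        linear_combination q.2 + h2⟩
  left_inv := by
    rintro ⟨⟨a, b⟩, hp⟩
    by_cases h : a.val % 2 = 1
    · dsimp only
      rw [dif_pos h]
      dsimp only
      rw [dif_pos (show (a + ((2^(m+2):ℕ) : ZMod (2^(m+3)))).val % 2 = 1 from by
        rw [flip_parity]; exact h)]
      exact Subtype.ext (Prod.ext (zflip_flip m a) rfl)
    · dsimp only
      rw [dif_neg h]
      dsimp only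
      rw [dif_neg h]
      exact Subtype.ext (Prod.ext rfl (zflip_flip m b))
  right_inv := by
    rintro ⟨⟨a, b⟩, hp⟩
    by_cases h : a.val % 2 = 1
    · dsimp only
      rw [dif_pos h]
      dsimp only
      rw [dif_pos (show (a + ((2^(m+2):ℕ) : ZMod (2^(m+3)))).val % 2 = 1 from by
        rw [flip_parity]; exact h)]
      exact Subtype.ext (Prod.ext (zflip_flip m a) rfl)
    · dsimp only
      rw [dif_neg h]
      dsimp only
      rw [dif_neg h]
      exact Subtype.ext (Prod.ext rfl (zflip_flip m b))

lemma proj_mem (m : ℕ) (t : ZMod (2^(m+4))) (a b : ZMod (2^(m+3)))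
    (h : sq2 m a + sq2 m b = t) :
    a^2 + b^2 = ((t.val : ℕ) : ZMod (2^(m+3))) := by
  rw [sq2, sq2, ← Nat.cast_add] at h
  have hval : t.val = (a.val^2 + b.val^2) % 2^(m+4) := by rw [← h, ZMod.val_natCast]
  rw [hval, cast_mod_dvd _ _ _ ⟨2, by ring⟩]
  push_cast
  rw [natCast_val_self, natCast_val_self]

lemma shift_low (m : ℕ) (t : ZMod (2^(m+4))) :
    (((t + ((2^(m+3):ℕ) : ZMod (2^(m+4)))).val : ℕ) : ZMod (2^(m+3)))
      = ((t.val : ℕ) : ZMod (2^(m+3))) := by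
  have hlt : t.val < 2^(m+4) := ZMod.val_lt t
  have h2 : (2:ℕ)^(m+4) = 2*2^(m+3) := by ring
  have hP : (0:ℕ) < 2^(m+3) := by positivity
  rw [ZMod.val_add, ZMod.val_natCast,
    show (2:ℕ)^(m+3) % 2^(m+4) = 2^(m+3) from Nat.mod_eq_of_lt (by omega),
    cast_mod_dvd _ _ _ ⟨2, by ring⟩, Nat.cast_add, ZMod.natCast_self, add_zero]

lemma shift_ne (m : ℕ) (t : ZMod (2^(m+4))) :
    t ≠ t + ((2^(m+3):ℕ) : ZMod (2^(m+4))) := by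
  intro h
  have hdz : ((2^(m+3):ℕ) : ZMod (2^(m+4))) = 0 := by linear_combination -h
  have hv := congrArg ZMod.val hdz
  rw [ZMod.val_natCast, ZMod.val_zero] at hv
  have h2 : (2:ℕ)^(m+4) = 2*2^(m+3) := by ring
  have hP : (0:ℕ) < 2^(m+3) := by positivity
  rw [Nat.mod_eq_of_lt (by omega)] at hv
  omega

lemma updown (m : ℕ) (t : ZMod (2^(m+4))) (a b : ZMod (2^(m+3)))
    (ha : a^2 + b^2 = ((t.val : ℕ) : ZMod (2^(m+3)))) :
    sq2 m a + sq2 m b = t ∨ sq2 m a + sq2 m b = t + ((2^(m+3) : ℕ) : ZMod (2^(m+4))) := by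
  set w := sq2 m a + sq2 m b with hw
  have hwc : w = ((a.val^2 + b.val^2 : ℕ) : ZMod (2^(m+4))) := by
    rw [hw, sq2, sq2, Nat.cast_add]
  have hwval : w.val = (a.val^2+b.val^2) % 2^(m+4) := by rw [hwc, ZMod.val_natCast]
  have hcast : ((w.val : ℕ) : ZMod (2^(m+3))) = ((t.val : ℕ) : ZMod (2^(m+3))) := by
    rw [hwval, cast_mod_dvd _ _ _ ⟨2, by ring⟩, ← ha]
    push_cast
    rw [natCast_val_self, natCast_val_self]
  have hmod : w.val % 2^(m+3) = t.val % 2^(m+3) :=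
    (ZMod.natCast_eq_natCast_iff _ _ _).mp hcast
  have hwlt : w.val < 2^(m+4) := ZMod.val_lt w
  have htlt : t.val < 2^(m+4) := ZMod.val_lt t
  have h2 : (2:ℕ)^(m+4) = 2*2^(m+3) := by ring
  have hP : (0:ℕ) < 2^(m+3) := by positivity
  have ew := Nat.div_add_mod w.val (2^(m+3))
  have et := Nat.div_add_mod t.val (2^(m+3))
  have hq1 : w.val / 2^(m+3) < 2 := by rw [Nat.div_lt_iff_lt_mul hP]; omega
  have hq2 : t.val / 2^(m+3) < 2 := by rw [Nat.div_lt_iff_lt_mul hP]; omega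
  have tri : w.val = t.val ∨ w.val = t.val + 2^(m+3) ∨ t.val = w.val + 2^(m+3) := by
    interval_cases h1 : w.val / 2^(m+3) <;> interval_cases h2' : t.val / 2^(m+3) <;> omega
  rcases tri with h | h | h
  · left; rw [← natCast_val_self _ w, h, natCast_val_self]
  · right; rw [← natCast_val_self _ w, h, Nat.cast_add, natCast_val_self]
  · right
    have ht' : t = w + ((2^(m+3) : ℕ) : ZMod (2^(m+4))) := by
      rw [← natCast_val_self _ t, h, Nat.cast_add, natCast_val_self]
    rw [ht', add_assoc, dshift_add_dshift, add_zero]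

noncomputable def splitEquiv (m : ℕ) (t : ZMod (2^(m+4))) :
    (Mset m t ⊕ Mset m (t + ((2^(m+3):ℕ) : ZMod (2^(m+4)))))
      ≃ Sol (m+3) ((t.val : ℕ) : ZMod (2^(m+3))) where
  toFun := fun q => match q with
    | .inl p => ⟨p.1, proj_mem m t p.1.1 p.1.2 p.2⟩
    | .inr p => ⟨p.1, by rw [proj_mem m _ p.1.1 p.1.2 p.2, shift_low]⟩
  invFun := fun q =>
    if h : sq2 m q.1.1 + sq2 m q.1.2 = t then .inl ⟨q.1, h⟩
    else .inr ⟨q.1, ((updown m t q.1.1 q.1.2 q.2).resolve_left h)⟩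
  left_inv := by
    rintro (⟨⟨a,b⟩,h⟩ | ⟨⟨a,b⟩,h⟩)
    · dsimp only
      rw [dif_pos h]
    · dsimp only
      rw [dif_neg (by rw [h]; exact fun hc => shift_ne m t (hc.symm))]
  right_inv := by
    rintro ⟨⟨a,b⟩,h⟩
    by_cases hc : sq2 m a + sq2 m b = t
    · dsimp only
      rw [dif_pos hc]
    · dsimp only
      rw [dif_neg hc]

lemma double (m : ℕ) (t : ZMod (2^(m+4))) (h4 : t.val % 4 ≠ 0) :
    cnt (m+4) t = 2 * cnt (m+3) ((t.val : ℕ) : ZMod (2^(m+3))) := by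
  have e1 := Nat.card_congr (liftEquiv m t)
  have e2 := Nat.card_congr (flipEquiv m t h4)
  have e3 := Nat.card_congr (splitEquiv m t)
  rw [Nat.card_prod, Nat.card_prod] at e1
  rw [Nat.card_sum] at e3
  simp only [Nat.card_eq_fintype_card, Fintype.card_fin] at e1 e2 e3 ⊢
  rw [cnt, cnt]
  simp only [Nat.card_eq_fintype_card]
  omega

lemma main : ∀ k : ℕ, 2 ≤ k → ∀ t : ZMod (2^k),
    (t = 0 → cnt k t = 2^k) ∧
    (∀ α β : ℕ, t ≠ 0 → t.val = 2^α*β → Odd β → α < k →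
      ((α < k-1 ∧ β%4 = 1 → cnt k t = 2^(k+1)) ∧
       (α < k-1 ∧ β%4 = 3 → cnt k t = 0) ∧
       (α = k-1 → cnt k t = 2^k))) := by
  intro k
  induction k using Nat.strong_induction_on with
  | _ k ih =>
  intro hk t
  match k, hk, ih, t with
  | 2, _, ih, t =>
    constructor
    · rintro rfl; rw [cnt_eq_card]; decide
    · intro α β htne ht hβ hα
      have hvlt : t.val < 2^2 := ZMod.val_lt t
      have hv0 : t.val ≠ 0 := fun h => htne (by rw [← natCast_val_self _ t, h, Nat.cast_zero])
      have htv : t = ((t.val : ℕ) : ZMod (2^2)) := (natCast_val_self _ t).symm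
      obtain ⟨c, hc⟩ := hβ
      norm_num at hvlt
      interval_cases α <;> norm_num at ht
      · refine ⟨?_, ?_, ?_⟩
        · rintro ⟨-, h2⟩
          have : t.val = 1 := by omega
          rw [htv, this, cnt_eq_card]; decide
        · rintro ⟨-, h2⟩
          have : t.val = 3 := by omega
          rw [htv, this, cnt_eq_card]; decide
        · intro h; omega
      · refine ⟨?_, ?_, ?_⟩
        · rintro ⟨h1, -⟩; omega
        · rintro ⟨h1, -⟩; omega
        · intro _
          have : t.val = 2 := by omega
          rw [htv, this, cnt_eq_card]; decide
  | 3, _, ih, t =>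
    constructor
    · rintro rfl; rw [cnt_eq_card]; decide
    · intro α β htne ht hβ hα
      have hvlt : t.val < 2^3 := ZMod.val_lt t
      have hv0 : t.val ≠ 0 := fun h => htne (by rw [← natCast_val_self _ t, h, Nat.cast_zero])
      have htv : t = ((t.val : ℕ) : ZMod (2^3)) := (natCast_val_self _ t).symm
      obtain ⟨c, hc⟩ := hβ
      norm_num at hvlt
      interval_cases α <;> norm_num at ht
      · refine ⟨?_, ?_, ?_⟩
        · rintro ⟨-, h2⟩
          have : t.val = 1 ∨ t.val = 5 := by omega
          rcases this with h | h <;> rw [htv, h, cnt_eq_card] <;> decide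
        · rintro ⟨-, h2⟩
          have : t.val = 3 ∨ t.val = 7 := by omega
          rcases this with h | h <;> rw [htv, h, cnt_eq_card] <;> decide
        · intro h; omega
      · refine ⟨?_, ?_, ?_⟩
        · rintro ⟨-, h2⟩
          have : t.val = 2 := by omega
          rw [htv, this, cnt_eq_card]; decide
        · rintro ⟨-, h2⟩
          have : t.val = 6 := by omega
          rw [htv, this, cnt_eq_card]; decide
        · intro h; omega
      · refine ⟨?_, ?_, ?_⟩
        · rintro ⟨h1, -⟩; omega
        · rintro ⟨h1, -⟩; omega
        · intro _
          have : t.val = 4 := by omega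
          rw [htv, this, cnt_eq_card]; decide
  | (m+4), _, ih, t =>
    constructor
    · rintro rfl
      have hq : cnt (m+4) ((4*(0 : ZMod (2^(m+2))).val : ℕ) : ZMod (2^(m+4)))
          = 4 * cnt (m+2) 0 := quarter (m+2) 0
      rw [ZMod.val_zero] at hq
      norm_num at hq
      rw [hq, (ih (m+2) (by omega) (by omega) 0).1 rfl]
      ring
    · intro α β htne ht hβ hα
      have hvlt : t.val < 2^(m+4) := ZMod.val_lt t
      have hv0 : t.val ≠ 0 := fun h => htne (by rw [← natCast_val_self _ t, h, Nat.cast_zero])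
      by_cases hα2 : 2 ≤ α
      · -- quarter reduction
        have hαeq : α - 2 + 2 = α := by omega
        have hpow : (2:ℕ)^α = 4 * 2^(α-2) := by
          conv_lhs => rw [← hαeq]
          ring
        have ht4 : t.val = 4*(2^(α-2)*β) := by rw [ht, hpow]; ring
        set X := 2^(α-2)*β with hX
        have h2 : (2:ℕ)^(m+4) = 4*2^(m+2) := by ring
        have hXlt : X < 2^(m+2) := by omega
        set s : ZMod (2^(m+2)) := ((X : ℕ) : ZMod (2^(m+2))) with hs
        have hsval : s.val = X := ZMod.val_cast_of_lt hXlt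
        have hteq : t = ((4*s.val : ℕ) : ZMod (2^(m+4))) := by
          rw [hsval, ← ht4, natCast_val_self]
        have hq : cnt (m+4) ((4*s.val : ℕ) : ZMod (2^(m+4))) = 4 * cnt (m+2) s :=
          quarter (m+2) s
        have hs0 : s ≠ 0 := by
          intro h
          rw [h, ZMod.val_zero] at hsval
          obtain ⟨c, hc⟩ := hβ
          have : (0:ℕ) < 2^(α-2) := by positivity
          have : (0:ℕ) < X := by rw [hX]; exact Nat.mul_pos ‹_› (by omega)
          omega
        obtain ⟨IH1, IH2, IH3⟩ :=
          (ih (m+2) (by omega) (by omega) s).2 (α-2) β hs0 (by rw [hsval]) hβ (by omega)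
        refine ⟨?_, ?_, ?_⟩
        · rintro ⟨h1, hmod⟩
          rw [hteq, hq, IH1 ⟨by omega, hmod⟩]; ring
        · rintro ⟨h1, hmod⟩
          rw [hteq, hq, IH2 ⟨by omega, hmod⟩]
        · intro h
          rw [hteq, hq, IH3 (by omega)]; ring
      · -- doubling reduction
        obtain ⟨c, hc⟩ := hβ
        have h4 : t.val % 4 ≠ 0 := by
          interval_cases α <;> norm_num at ht <;> omega
        have hd : cnt (m+4) t = 2 * cnt (m+3) ((t.val : ℕ) : ZMod (2^(m+3))) :=
          double m t h4
        set u : ZMod (2^(m+3)) := ((t.val : ℕ) : ZMod (2^(m+3))) with hu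
        have huval : u.val = t.val % 2^(m+3) := ZMod.val_natCast _ _
        have h23 : (2:ℕ)^(m+4) = 2*2^(m+3) := by ring
        have hu0 : u ≠ 0 := by
          intro h
          rw [h, ZMod.val_zero] at huval
          have h43 : (2:ℕ)^(m+3) % 4 = 0 := by
            rw [show (2:ℕ)^(m+3) = 4*2^(m+1) from by ring]; omega
          rcases Nat.lt_or_ge t.val (2^(m+3)) with hcc | hcc
          · rw [Nat.mod_eq_of_lt hcc] at huval; omega
          · rw [Nat.mod_eq_sub_mod hcc,
              Nat.mod_eq_of_lt (by omega)] at huval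
            omega
        rcases Nat.lt_or_ge t.val (2^(m+3)) with hcc | hcc
        · have huv : u.val = t.val := by rw [huval, Nat.mod_eq_of_lt hcc]
          obtain ⟨IH1, IH2, IH3⟩ :=
            (ih (m+3) (by omega) (by omega) u).2 α β hu0 (by rw [huv, ht]) ⟨c, hc⟩ (by omega)
          refine ⟨?_, ?_, ?_⟩
          · rintro ⟨h1, hmod⟩
            rw [hd, IH1 ⟨by omega, hmod⟩]; ring
          · rintro ⟨h1, hmod⟩
            rw [hd, IH2 ⟨by omega, hmod⟩]
          · intro h; omega
        · have huv : u.val = t.val - 2^(m+3) := by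
            rw [huval, Nat.mod_eq_sub_mod hcc, Nat.mod_eq_of_lt (by omega)]
          interval_cases α <;> norm_num at ht
          · -- α = 0, β = t.val
            set β' : ℕ := β - 2^(m+3) with hβ'
            have hβ'odd : Odd β' := by
              refine ⟨c - 2^(m+2), ?_⟩
              have : (2:ℕ)^(m+3) = 2*2^(m+2) := by ring
              omega
            have hβ'mod : β' % 4 = β % 4 := by
              have h43 : (2:ℕ)^(m+3) % 4 = 0 := by
                rw [show (2:ℕ)^(m+3) = 4*2^(m+1) from by ring]; omega
              have : (2:ℕ)^(m+3) = 2*2^(m+2) := by ring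
              omega
            obtain ⟨IH1, IH2, IH3⟩ :=
              (ih (m+3) (by omega) (by omega) u).2 0 β' hu0
                (by rw [huv, ht]; omega) hβ'odd (by omega)
            refine ⟨?_, ?_, ?_⟩
            · rintro ⟨h1, hmod⟩
              rw [hd, IH1 ⟨by omega, by omega⟩]; ring
            · rintro ⟨h1, hmod⟩
              rw [hd, IH2 ⟨by omega, by omega⟩]
            · intro h; omega
          · -- α = 1, t.val = 2β
            set β' : ℕ := β - 2^(m+2) with hβ'
            have hm2 : (2:ℕ)^(m+3) = 2*2^(m+2) := by ring
            have hβ'odd : Odd β' := by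
              refine ⟨c - 2^(m+1), ?_⟩
              have : (2:ℕ)^(m+2) = 2*2^(m+1) := by ring
              omega
            have hβ'mod : β' % 4 = β % 4 := by
              have h42 : (2:ℕ)^(m+2) % 4 = 0 := by
                rw [show (2:ℕ)^(m+2) = 4*2^m from by ring]; omega
              omega
            obtain ⟨IH1, IH2, IH3⟩ :=
              (ih (m+3) (by omega) (by omega) u).2 1 β' hu0
                (by rw [huv, ht]; omega) hβ'odd (by omega)
            refine ⟨?_, ?_, ?_⟩
            · rintro ⟨h1, hmod⟩
              rw [hd, IH1 ⟨by omega, by omega⟩]; ring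
            · rintro ⟨h1, hmod⟩
              rw [hd, IH2 ⟨by omega, by omega⟩]
            · intro h; omega

theorem stmt_2 (k : ℕ) (hk : 2 ≤ k) (t : ZMod (2 ^ k)) :
    (t = 0 → sumSqCount 2 (2 ^ k) t = 2 ^ k) ∧
    (∀ α β : ℕ, t ≠ 0 → t.val = 2 ^ α * β → Odd β → α < k →
      ((α < k - 1 ∧ β % 4 = 1 → sumSqCount 2 (2 ^ k) t = 2 ^ (k + 1)) ∧
       (α < k - 1 ∧ β % 4 = 3 → sumSqCount 2 (2 ^ k) t = 0) ∧
       (α = k - 1 → sumSqCount 2 (2 ^ k) t = 2 ^ k))) := by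
  rw [sumSqCount_eq k t]
  exact main k hk t
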